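/- For a permutation W = w_1...w_{2n+1} of [2n+1] with exactly n descents, among the 2n+1 cyclic shifts of W, exactly n+1 have exactly n descents (the rest having n-1 or n+1 descents, depending on whether the cyclic word has n or n+1 cyclic descents). -/

import Mathlib

open scoped Classical

/-- Number of descents of `w` occurring among the first `ℓ` positions
(0-indexed: position `i` is a descent if `w i > w (i+1)`). -/
noncomputable def descentsIn {N : ℕ} (w : Equiv.Perm (Fin N)) (ℓ : ℕ) : ℕ :=
  ((Finset.range ℓ).filter (fun i =>
    ∃ h : i + 1 < N, w ⟨i + 1, h⟩ < w ⟨i, Nat.lt_of_succ_lt h⟩)).card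

/-- Total number of descents of a permutation of `[N]`. -/
noncomputable def descents {N : ℕ} (w : Equiv.Perm (Fin N)) : ℕ :=
  descentsIn w (N - 1)

/-- The Eulerian number `A(m, N)`: the number of permutations of `[N]`
with exactly `m` descents. -/
noncomputable def eulerian (m N : ℕ) : ℕ :=
  (Finset.univ.filter (fun w : Equiv.Perm (Fin N) => descents w = m)).card


/-- The number of cyclic descents of `w ∈ S_N`: positions `i` (mod `N`)
with `w i > w (i+1)`. -/
noncomputable def cyclicDescents {N : ℕ} [NeZero N] (w : Equiv.Perm (Fin N)) : ℕ :=
  (Finset.univ.filter (fun i : Fin N => w (i + 1) < w i)).card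

/-- The cyclic shift of `w` starting at position `k`: `i ↦ w (i + k)`. -/
noncomputable def cyclicShift {N : ℕ} [NeZero N] (w : Equiv.Perm (Fin N)) (k : Fin N) :
    Equiv.Perm (Fin N) :=
  (Equiv.addRight k).trans w

open Finset

lemma mk_add_one {M : ℕ} (i : ℕ) (h : i + 1 < M + 1) :
    (⟨i, Nat.lt_of_succ_lt h⟩ : Fin (M + 1)) + 1 = ⟨i + 1, h⟩ := by
  apply Fin.ext
  simp [Fin.add_def, Fin.val_one', Nat.mod_eq_of_lt h]

lemma descents_eq_card {M : ℕ} (w : Equiv.Perm (Fin (M + 1))) :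
    descents w =
      (univ.filter (fun j : Fin (M + 1) => (j : ℕ) < M ∧ w (j + 1) < w j)).card := by
  unfold descents descentsIn
  simp only [Nat.add_sub_cancel]
  refine Finset.card_bij' (fun i hi => ⟨i, ?_⟩) (fun j _ => (j : ℕ)) ?_ ?_ ?_ ?_
  · have := Finset.mem_filter.1 hi
    have := Finset.mem_range.1 this.1
    omega
  · intro a ha
    obtain ⟨ha1', h, ha2⟩ := Finset.mem_filter.1 ha
    have ha1 := Finset.mem_range.1 ha1'
    have ham : a < M := ha1
    simp only [Finset.mem_filter, Finset.mem_univ, true_and]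
    constructor
    · exact ham
    · rw [mk_add_one a (by omega)]
      exact ha2
  · intro b hb
    obtain ⟨hb1, hb2⟩ := by simpa using Finset.mem_filter.1 hb
    simp only [Finset.mem_filter, Finset.mem_range, true_and]
    refine ⟨hb1, by omega, ?_⟩
    have he : (⟨(b : ℕ), b.isLt⟩ : Fin (M+1)) = b := Fin.eta b b.isLt
    rw [← mk_add_one (b : ℕ) (by omega), he]
    exact hb2
  · intro a ha; rfl
  · intro b hb; exact Fin.eta b b.isLt

lemma add_eq_sub_one_iff {M : ℕ} (j k : Fin (M + 1)) :
    j + k = k - 1 ↔ (j : ℕ) = M := by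
  constructor
  · intro h
    have : j = -1 := by
      have := congrArg (fun x => x - k) h
      simpa [add_sub_cancel_right, sub_sub, add_comm] using this
    rw [this, Fin.coe_neg_one]
  · intro h
    have : j = -1 := Fin.ext (by rw [h, Fin.coe_neg_one])
    rw [this, neg_add_eq_sub]

lemma shift_descents {M : ℕ} (w : Equiv.Perm (Fin (M + 1))) (k : Fin (M + 1)) :
    descents (cyclicShift w k) =
      (univ.filter (fun m : Fin (M + 1) => m ≠ k - 1 ∧ w (m + 1) < w m)).card := by
  rw [descents_eq_card]
  have hs : ∀ j : Fin (M + 1), cyclicShift w k j = w (j + k) := by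
    intro j; simp [cyclicShift, Equiv.addRight]
  refine Finset.card_bij' (fun j _ => j + k) (fun m _ => m - k) ?_ ?_ ?_ ?_
  · intro a ha
    obtain ⟨ha1, ha2⟩ := by simpa using Finset.mem_filter.1 ha
    rw [hs, hs] at ha2
    simp only [Finset.mem_filter, Finset.mem_univ, true_and]
    refine ⟨fun hc => ?_, ?_⟩
    · rw [add_eq_sub_one_iff] at hc; omega
    · rw [add_right_comm]; exact ha2
  · intro b hb
    obtain ⟨hb1, hb2⟩ := by simpa using Finset.mem_filter.1 hb
    simp only [Finset.mem_filter, Finset.mem_univ, true_and]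
    constructor
    · have : ¬ ((b - k : Fin (M+1)) : ℕ) = M := by
        intro hc
        exact hb1 (by rw [← add_eq_sub_one_iff (b - k) k, sub_add_cancel] at hc; exact hc)
      have := (b - k).isLt; omega
    · rw [hs, hs, add_right_comm, sub_add_cancel]
      exact hb2
  · intro a _; exact add_sub_cancel_right a k
  · intro b _; exact sub_add_cancel b k

lemma key {M : ℕ} (w : Equiv.Perm (Fin (M + 1))) (k : Fin (M + 1)) :
    descents (cyclicShift w k) + (if w k < w (k - 1) then 1 else 0) = cyclicDescents w := by
  rw [shift_descents]
  unfold cyclicDescents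
  have h1 : (univ.filter (fun m : Fin (M + 1) => m ≠ k - 1 ∧ w (m + 1) < w m)) =
      (univ.filter (fun m : Fin (M + 1) => w (m + 1) < w m)).erase (k - 1) := by
    ext m; simp [Finset.mem_erase, and_comm]
  rw [h1]
  by_cases hmem : w k < w (k - 1)
  · have hk : k - 1 ∈ univ.filter (fun m : Fin (M + 1) => w (m + 1) < w m) := by
      simp [sub_add_cancel, hmem]
    rw [if_pos hmem, Finset.card_erase_of_mem hk]
    have := Finset.card_pos.2 ⟨_, hk⟩
    omega
  · rw [if_neg hmem, Nat.add_zero, Finset.erase_eq_of_notMem (by simp [sub_add_cancel, hmem])]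

lemma cardA {M : ℕ} (w : Equiv.Perm (Fin (M + 1))) :
    (univ.filter (fun k : Fin (M + 1) => w k < w (k - 1))).card = cyclicDescents w := by
  unfold cyclicDescents
  refine Finset.card_bij' (fun k _ => k - 1) (fun i _ => i + 1) ?_ ?_ ?_ ?_
  · intro a ha; simpa [sub_add_cancel] using (Finset.mem_filter.1 ha).2
  · intro b hb; simpa [add_sub_cancel_right] using (Finset.mem_filter.1 hb).2
  · intro a _; exact sub_add_cancel a 1
  · intro b _; exact add_sub_cancel_right b 1

/-- Among the `2n+1` cyclic shifts of a permutation `W ∈ S_{2n+1}` with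
exactly `n` descents, exactly `n+1` have exactly `n` descents; the remaining
shifts all have `n-1` descents if the cyclic word has `n` cyclic descents,
and all have `n+1` descents if the cyclic word has `n+1` cyclic descents. -/
theorem card_cyclicShifts_with_n_descents (n : ℕ) (hn : 1 ≤ n)
    (w : Equiv.Perm (Fin (2 * n + 1))) (hw : descents w = n) :
    (Finset.univ.filter (fun k : Fin (2 * n + 1) =>
        descents (cyclicShift w k) = n)).card = n + 1 ∧
    (cyclicDescents w = n →
      ∀ k, descents (cyclicShift w k) = n ∨ descents (cyclicShift w k) = n - 1) ∧
    (cyclicDescents w = n + 1 →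
      ∀ k, descents (cyclicShift w k) = n ∨ descents (cyclicShift w k) = n + 1) := by
  have key' := fun k => key (M := 2 * n) w k
  have h0 : cyclicShift w 0 = w := by
    apply Equiv.ext; intro i; simp [cyclicShift, Equiv.addRight]
  have hc : cyclicDescents w = n ∨ cyclicDescents w = n + 1 := by
    have := key' 0
    rw [h0, hw] at this
    by_cases h : w 0 < w (0 - 1)
    · rw [if_pos h] at this; omega
    · rw [if_neg h] at this; omega
  have hAc := cardA (M := 2 * n) w
  refine ⟨?_, ?_, ?_⟩
  · rcases hc with hc | hc
    · have heq : (univ.filter (fun k : Fin (2 * n + 1) => descents (cyclicShift w k) = n)) =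
          univ.filter (fun k : Fin (2 * n + 1) => ¬ (w k < w (k - 1))) := by
        apply Finset.filter_congr
        intro k _
        have := key' k
        rw [hc] at this
        by_cases h : w k < w (k - 1)
        · rw [if_pos h] at this; simp [h]; omega
        · rw [if_neg h] at this; simp [h]; omega
      rw [heq]
      have := Finset.card_filter_add_card_filter_not
        (s := (univ : Finset (Fin (2 * n + 1)))) (fun k => w k < w (k - 1))
      rw [hAc, hc] at this
      simp only [Finset.card_univ, Fintype.card_fin] at this
      omega
    · have heq : (univ.filter (fun k : Fin (2 * n + 1) => descents (cyclicShift w k) = n)) =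
          univ.filter (fun k : Fin (2 * n + 1) => w k < w (k - 1)) := by
        apply Finset.filter_congr
        intro k _
        have := key' k
        rw [hc] at this
        by_cases h : w k < w (k - 1)
        · rw [if_pos h] at this; simp [h]; omega
        · rw [if_neg h] at this; simp [h]; omega
      rw [heq, hAc, hc]
  · intro h k
    have := key' k
    rw [h] at this
    by_cases hk : w k < w (k - 1)
    · rw [if_pos hk] at this; omega
    · rw [if_neg hk] at this; omega
  · intro h k
    have := key' k
    rw [h] at this
    by_cases hk : w k < w (k - 1)
    · rw [if_pos hk] at this; omega
    · rw [if_neg hk] at this; omega
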